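/- arXiv:2407.12147 — 2 statements merged into one kernel-verified Lean document; each statement's English description precedes it below -/
import Mathlib

section
/- For any vertex v of the augmented point set and the two added auxiliary points v_b = (v_x − ε, Bfirst(v)_y − ε) and v_{b'} = (Blast(v)_x + ε, v_y + ε): both v_b and v_{b'} lie on the bottom boundary of the augmented set, and any point adjacent to v_{b'} is adjacent to Blast(v), and any point adjacent to v_b is adjacent to Bfirst(v); hence distances between all original points are unchanged. -/
/-- `inTL p q` : point `p` lies in the top-left quadrant of point `q`. -/
def inTL (p q : ℝ × ℝ) : Prop := p.1 < q.1 ∧ q.2 < p.2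

/-- The permutation graph of a point set `S`: two points are adjacent iff both belong
to `S` and one lies in the top-left quadrant of the other. -/
def pGraph (S : Finset (ℝ × ℝ)) : SimpleGraph (ℝ × ℝ) where
  Adj p q := p ∈ S ∧ q ∈ S ∧ (inTL p q ∨ inTL q p)
  symm := by constructor; rintro p q ⟨hp, hq, h⟩; exact ⟨hq, hp, h.symm⟩
  loopless := by constructor; rintro p ⟨-, -, ⟨h, _⟩ | ⟨h, _⟩⟩ <;> exact lt_irrefl _ h

/-- `p` is on the top boundary of `S`: its top-left quadrant contains no point of `S`. -/
def onTop (S : Finset (ℝ × ℝ)) (p : ℝ × ℝ) : Prop := ∀ q ∈ S, ¬ inTL q p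

/-- `p` is on the bottom boundary of `S`: its bottom-right quadrant contains no point of `S`. -/
def onBottom (S : Finset (ℝ × ℝ)) (p : ℝ × ℝ) : Prop := ∀ q ∈ S, ¬ inTL p q

/-- All points of `S` have pairwise distinct x-coordinates and pairwise distinct
y-coordinates. -/
def DistinctCoords (S : Finset (ℝ × ℝ)) : Prop :=
  ∀ p ∈ S, ∀ q ∈ S, p ≠ q → p.1 ≠ q.1 ∧ p.2 ≠ q.2

/-- From any point of `S`, there is a point of `S` weakly below-right of it that lies
on the bottom boundary of `S`. -/
lemma exists_onBottom (S : Finset (ℝ × ℝ)) (q : ℝ × ℝ) (hq : q ∈ S) :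
    ∃ r ∈ S, q.1 ≤ r.1 ∧ r.2 ≤ q.2 ∧ onBottom S r := by
  classical
  obtain ⟨r, hr, hmin⟩ := (S.filter (fun r => q.1 ≤ r.1 ∧ r.2 ≤ q.2)).exists_min_image
    Prod.snd ⟨q, by simp [hq]⟩
  simp only [Finset.mem_filter] at hr
  refine ⟨r, hr.1, hr.2.1, hr.2.2, ?_⟩
  rintro s hs ⟨h1, h2⟩
  have hsT : s ∈ S.filter (fun r => q.1 ≤ r.1 ∧ r.2 ≤ q.2) := by
    simp only [Finset.mem_filter]
    exact ⟨hs, le_of_lt (lt_of_le_of_lt hr.2.1 h1), le_trans (le_of_lt h2) hr.2.2⟩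
  exact absurd (hmin s hsT) (not_le.mpr h2)

/-- for a vertex `v` of the point set and the two auxiliary points
`vb = (v.1 − ε, Bfirst(v).2 − ε)` and `vb' = (Blast(v).1 + ε, v.2 + ε)` (with `ε > 0`
small enough that the offset strips contain no coordinates of points of `S`): both
`vb` and `vb'` lie on the bottom boundary of the augmented set, every point adjacent
to `vb'` is adjacent to `Blast(v)`, every point adjacent to `vb` is adjacent to
`Bfirst(v)`, and hence all distances between points of `S` are unchanged. -/
theorem stmt16 (S : Finset (ℝ × ℝ)) (hS : DistinctCoords S)
    (v : ℝ × ℝ) (hv : v ∈ S)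
    (bf bl : ℝ × ℝ)
    (hbf : bf ∈ S ∧ onBottom S bf ∧ (pGraph S).Adj v bf ∧
      ∀ q ∈ S, onBottom S q → (pGraph S).Adj v q → bf.1 ≤ q.1)
    (hbl : bl ∈ S ∧ onBottom S bl ∧ (pGraph S).Adj v bl ∧
      ∀ q ∈ S, onBottom S q → (pGraph S).Adj v q → q.1 ≤ bl.1)
    (ε : ℝ) (hε : 0 < ε)
    (hsmall₁ : ∀ q ∈ S, ¬ (v.1 - ε ≤ q.1 ∧ q.1 < v.1))
    (hsmall₂ : ∀ q ∈ S, ¬ (bf.2 - ε ≤ q.2 ∧ q.2 < bf.2))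
    (hsmall₃ : ∀ q ∈ S, ¬ (bl.1 < q.1 ∧ q.1 ≤ bl.1 + ε))
    (hsmall₄ : ∀ q ∈ S, ¬ (v.2 < q.2 ∧ q.2 ≤ v.2 + ε))
    (vb vb' : ℝ × ℝ)
    (hvb : vb = (v.1 - ε, bf.2 - ε)) (hvb' : vb' = (bl.1 + ε, v.2 + ε))
    (S' : Finset (ℝ × ℝ)) (hS' : S' = insert vb (insert vb' S)) :
    onBottom S' vb ∧ onBottom S' vb' ∧
    (∀ q ∈ S, (pGraph S').Adj q vb' → (pGraph S').Adj q bl) ∧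
    (∀ q ∈ S, (pGraph S').Adj q vb → (pGraph S').Adj q bf) ∧
    (∀ p ∈ S, ∀ q ∈ S, (pGraph S').dist p q = (pGraph S).dist p q) := by
  obtain ⟨hbfS, hbfB, hbfA, hbfMin⟩ := hbf
  obtain ⟨hblS, hblB, hblA, hblMax⟩ := hbl
  -- `v` sees `bf` and `bl` in its bottom-right quadrant
  have hvbf : inTL v bf := by
    rcases hbfA.2.2 with h | h
    · exact h
    · exact absurd h (hbfB v hv)
  have hvbl : inTL v bl := by
    rcases hblA.2.2 with h | h
    · exact h
    · exact absurd h (hblB v hv)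
  have hSsub : ∀ q ∈ S, q ∈ S' := by
    intro q hqS; rw [hS']; simp [hqS]
  have hmem : ∀ q ∈ S', q = vb ∨ q = vb' ∨ q ∈ S := by
    intro q hq; rw [hS'] at hq; simpa using hq
  -- `vb` is on the bottom boundary of `S'`
  have hBvb : onBottom S' vb := by
    intro q hq hTL
    obtain ⟨h1, h2⟩ := hTL
    rcases hmem q hq with rfl | rfl | hqS
    · exact lt_irrefl _ h2
    · rw [hvb, hvb'] at h2
      simp only at h2
      have := hvbf.2
      linarith
    · rw [hvb] at h1 h2
      simp only at h1 h2
      -- q.1 ≥ v.1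
      have hq1 : v.1 ≤ q.1 := by
        by_contra hlt
        exact hsmall₁ q hqS ⟨le_of_lt h1, not_le.mp hlt⟩
      have hq2 : q.2 < v.2 := by
        have := hvbf.2; linarith
      obtain ⟨r, hrS, hr1, hr2, hrB⟩ := exists_onBottom S q hqS
      have hqv : q ≠ v := fun h => by rw [h] at hq2; exact lt_irrefl _ hq2
      have hq1' : v.1 < q.1 :=
        lt_of_le_of_ne hq1 (fun h => (hS q hqS v hv hqv).1 h.symm)
      have hAdj : (pGraph S).Adj v r :=
        ⟨hv, hrS, Or.inl ⟨lt_of_lt_of_le hq1' hr1, lt_of_le_of_lt hr2 hq2⟩⟩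
      have hmin := hbfMin r hrS hrB hAdj
      have hrbf : r ≠ bf := by
        intro h
        rw [h] at hr2
        linarith [hvbf.2]
      have hlt : bf.1 < r.1 :=
        lt_of_le_of_ne hmin (fun h => (hS bf hbfS r hrS (Ne.symm hrbf)).1 h)
      exact hbfB r hrS ⟨hlt, by linarith⟩
  -- `vb'` is on the bottom boundary of `S'`
  have hBvb' : onBottom S' vb' := by
    intro q hq hTL
    obtain ⟨h1, h2⟩ := hTL
    rcases hmem q hq with rfl | rfl | hqS
    · rw [hvb, hvb'] at h1
      simp only at h1
      have := hvbl.1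
      linarith
    · exact lt_irrefl _ h2
    · rw [hvb'] at h1 h2
      simp only at h1 h2
      have hq2 : q.2 ≤ v.2 := by
        by_contra hlt
        exact hsmall₄ q hqS ⟨not_le.mp hlt, le_of_lt h2⟩
      have hq1 : v.1 < q.1 := by
        have := hvbl.1; linarith
      have hqv : q ≠ v := fun h => by rw [h] at hq1; exact lt_irrefl _ hq1
      have hq2' : q.2 < v.2 :=
        lt_of_le_of_ne hq2 (fun h => (hS q hqS v hv hqv).2 h)
      obtain ⟨r, hrS, hr1, hr2, hrB⟩ := exists_onBottom S q hqS
      have hAdj : (pGraph S).Adj v r :=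
        ⟨hv, hrS, Or.inl ⟨lt_of_lt_of_le hq1 hr1, lt_of_le_of_lt hr2 hq2'⟩⟩
      have hmax := hblMax r hrS hrB hAdj
      have : bl.1 + ε < r.1 := lt_of_lt_of_le h1 hr1
      linarith
  -- adjacency transfer lemmas (for arbitrary points of `S'`)
  have hA' : ∀ q, (pGraph S').Adj q vb' → (pGraph S').Adj q bl := by
    rintro q ⟨hq, hb, h | h⟩
    · -- q in top-left of vb'
      rw [hvb'] at h
      obtain ⟨h1, h2⟩ := h
      simp only at h1 h2
      have hqS : q ∈ S := by
        rcases hmem q hq with rfl | rfl | hqS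
        · rw [hvb] at h2; simp only at h2
          have := hvbf.2; linarith
        · rw [hvb'] at h2; simp only at h2; linarith
        · exact hqS
      have hq1 : q.1 ≤ bl.1 := by
        by_contra hlt
        exact hsmall₃ q hqS ⟨not_le.mp hlt, le_of_lt h1⟩
      have hq2 : bl.2 < q.2 := by
        have := hvbl.2; linarith
      have hqbl : q ≠ bl := fun h => by rw [h] at hq2; exact lt_irrefl _ hq2
      have hq1' : q.1 < bl.1 :=
        lt_of_le_of_ne hq1 (fun h => (hS q hqS bl hblS hqbl).1 h)
      exact ⟨hq, hSsub bl hblS, Or.inl ⟨hq1', hq2⟩⟩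
    · exact absurd h (hBvb' q hq)
  have hA : ∀ q, (pGraph S').Adj q vb → (pGraph S').Adj q bf := by
    rintro q ⟨hq, hb, h | h⟩
    · rw [hvb] at h
      obtain ⟨h1, h2⟩ := h
      simp only at h1 h2
      have hqS : q ∈ S := by
        rcases hmem q hq with rfl | rfl | hqS
        · rw [hvb] at h1; simp only at h1; linarith
        · rw [hvb'] at h1; simp only at h1
          have := hvbl.1; linarith
        · exact hqS
      have hq2 : bf.2 ≤ q.2 := by
        by_contra hlt
        exact hsmall₂ q hqS ⟨by linarith, not_le.mp hlt⟩
      have hq1 : q.1 < bf.1 := by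
        have := hvbf.1; linarith
      have hqbf : q ≠ bf := fun h => by rw [h] at hq1; exact lt_irrefl _ hq1
      have hq2' : bf.2 < q.2 :=
        lt_of_le_of_ne hq2 (fun h => (hS q hqS bf hbfS hqbf).2 h.symm)
      exact ⟨hq, hSsub bf hbfS, Or.inl ⟨hq1, hq2'⟩⟩
    · exact absurd h (hBvb q hq)
  -- `vb` is not adjacent to `vb'`
  have hnadj : ¬ (pGraph S').Adj vb vb' := by
    rintro ⟨-, -, h | h⟩
    · rw [hvb, hvb'] at h
      obtain ⟨-, h2⟩ := h
      simp only at h2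
      have := hvbf.2; linarith
    · rw [hvb, hvb'] at h
      obtain ⟨h1, -⟩ := h
      simp only at h1
      have := hvbl.1; linarith
  have hvbS : vb ∉ S := by
    intro h
    exact hsmall₁ vb h ⟨by rw [hvb], by rw [hvb]; simp; linarith⟩
  have hvb'S : vb' ∉ S := by
    intro h
    exact hsmall₃ vb' h ⟨by rw [hvb']; simp; linarith, by rw [hvb']⟩
  -- adjacency within `S` is the same in both graphs
  have hAdjIff : ∀ p ∈ S, ∀ q ∈ S, ((pGraph S').Adj p q ↔ (pGraph S).Adj p q) := by
    intro p hp q hq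
    constructor
    · rintro ⟨-, -, h⟩; exact ⟨hp, hq, h⟩
    · rintro ⟨-, -, h⟩; exact ⟨hSsub p hp, hSsub q hq, h⟩
  have hle : pGraph S ≤ pGraph S' := by
    rintro p q ⟨hp, hq, h⟩; exact ⟨hSsub p hp, hSsub q hq, h⟩
  -- Any walk in pGraph S' between points of S can be replaced by a walk in
  -- pGraph S of at most the same length.
  have key : ∀ n, ∀ p q : ℝ × ℝ, p ∈ S → q ∈ S →
      ∀ w : (pGraph S').Walk p q, w.length ≤ n →
      ∃ w' : (pGraph S).Walk p q, w'.length ≤ w.length := by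
    intro n
    induction n using Nat.strong_induction_on with
    | _ n ih =>
      intro p q hp hq w hw
      cases w with
      | nil => exact ⟨SimpleGraph.Walk.nil, le_refl _⟩
      | @cons _ a _ h w₁ =>
        rcases hmem a h.2.1 with rfl | rfl | haS
        · -- next vertex is `vb`
          cases w₁ with
          | nil => exact absurd hq hvbS
          | @cons _ b _ h2 w₂ =>
            have hbS : b ∈ S := by
              rcases hmem b h2.2.1 with rfl | rfl | hbS
              · exact absurd h2 ((pGraph S').loopless.irrefl _)
              · exact absurd h2 hnadj
              · exact hbS
            have h1' : (pGraph S).Adj p bf := by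
              have := hA p h
              exact (hAdjIff p hp bf hbfS).mp this
            have h2' : (pGraph S).Adj bf b := by
              have := hA b h2.symm
              exact ((hAdjIff b hbS bf hbfS).mp this).symm
            have hn : 0 < n := by
              simp only [SimpleGraph.Walk.length_cons] at hw
              omega
            obtain ⟨w', hw'⟩ := ih (n - 2) (by omega) b q hbS hq w₂ (by
              simp only [SimpleGraph.Walk.length_cons] at hw; omega)
            refine ⟨SimpleGraph.Walk.cons h1' (SimpleGraph.Walk.cons h2' w'), ?_⟩
            simp only [SimpleGraph.Walk.length_cons]
            omega
        · -- next vertex is `vb'`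
          cases w₁ with
          | nil => exact absurd hq hvb'S
          | @cons _ b _ h2 w₂ =>
            have hbS : b ∈ S := by
              rcases hmem b h2.2.1 with rfl | rfl | hbS
              · exact absurd h2.symm hnadj
              · exact absurd h2 ((pGraph S').loopless.irrefl _)
              · exact hbS
            have h1' : (pGraph S).Adj p bl := by
              have := hA' p h
              exact (hAdjIff p hp bl hblS).mp this
            have h2' : (pGraph S).Adj bl b := by
              have := hA' b h2.symm
              exact ((hAdjIff b hbS bl hblS).mp this).symm
            obtain ⟨w', hw'⟩ := ih (n - 2) (by
              simp only [SimpleGraph.Walk.length_cons] at hw; omega) b q hbS hq w₂ (by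
              simp only [SimpleGraph.Walk.length_cons] at hw; omega)
            refine ⟨SimpleGraph.Walk.cons h1' (SimpleGraph.Walk.cons h2' w'), ?_⟩
            simp only [SimpleGraph.Walk.length_cons]
            omega
        · -- next vertex is in `S`
          have h1' : (pGraph S).Adj p a := (hAdjIff p hp a haS).mp h
          obtain ⟨w', hw'⟩ := ih (n - 1) (by
            simp only [SimpleGraph.Walk.length_cons] at hw; omega) a q haS hq w₁ (by
            simp only [SimpleGraph.Walk.length_cons] at hw; omega)
          refine ⟨SimpleGraph.Walk.cons h1' w', ?_⟩
          simp only [SimpleGraph.Walk.length_cons]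
          omega
  refine ⟨hBvb, hBvb', fun q _ h => hA' q h, fun q _ h => hA q h, ?_⟩
  intro p hp q hq
  by_cases hr : (pGraph S').Reachable p q
  · -- reachable in S'; also reachable in S via key
    obtain ⟨wS', hwS'⟩ := hr.exists_walk_length_eq_dist
    obtain ⟨w', hw'⟩ := key wS'.length p q hp hq wS' (le_refl _)
    have hrS : (pGraph S).Reachable p q := ⟨w'⟩
    apply le_antisymm
    · obtain ⟨wS, hwS⟩ := hrS.exists_walk_length_eq_dist
      calc (pGraph S').dist p q ≤ (wS.mapLe hle).length := SimpleGraph.dist_le _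
        _ = wS.length := by simp [SimpleGraph.Walk.mapLe]
        _ = (pGraph S).dist p q := hwS
    ·
      calc (pGraph S).dist p q ≤ w'.length := SimpleGraph.dist_le _
        _ ≤ wS'.length := hw'
        _ = (pGraph S').dist p q := hwS'
  · have hrS : ¬ (pGraph S).Reachable p q := fun h => hr (h.mono hle)
    rw [SimpleGraph.dist_eq_zero_of_not_reachable hr,
      SimpleGraph.dist_eq_zero_of_not_reachable hrS]
end

section
/- After adding for each original point the four auxiliary boundary points, for any two original points v, w: w lies in the bottom-right quadrant of v if and only if Bfirst(v) < Bfirst(w) ≤ Blast(w) < Blast(v) in the bottom-boundary order; symmetrically, w lies in the top-left quadrant of v iff Tfirst(v) < Tfirst(w) ≤ Tlast(w) < Tlast(v). -/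
lemma pGraph_adj {S : Finset (ℝ × ℝ)} {p q : ℝ × ℝ} :
    (pGraph S).Adj p q ↔ p ∈ S ∧ q ∈ S ∧ (inTL p q ∨ inTL q p) := Iff.rfl

def negP (p : ℝ × ℝ) : ℝ × ℝ := (-p.1, -p.2)

lemma negP_negP (p : ℝ × ℝ) : negP (negP p) = p := by simp [negP]

lemma inTL_negP {p q : ℝ × ℝ} : inTL (negP p) (negP q) ↔ inTL q p := by
  unfold inTL negP
  dsimp
  constructor <;> rintro ⟨a, b⟩ <;> exact ⟨by linarith, by linarith⟩

lemma mem_negP_image {S : Finset (ℝ × ℝ)} {p : ℝ × ℝ} :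
    p ∈ S.image negP ↔ negP p ∈ S := by
  simp only [Finset.mem_image]
  constructor
  · rintro ⟨q, hq, rfl⟩; rw [negP_negP]; exact hq
  · intro h; exact ⟨negP p, h, negP_negP p⟩

lemma onBottom_negP {S : Finset (ℝ × ℝ)} {p : ℝ × ℝ} :
    onBottom (S.image negP) (negP p) ↔ onTop S p := by
  unfold onBottom onTop
  constructor
  · intro h q hq
    have := h (negP q) (Finset.mem_image_of_mem _ hq)
    rw [inTL_negP] at this; exact this
  · intro h q hq hin
    have hq' : negP q ∈ S := mem_negP_image.mp hq
    have h2 : inTL (negP p) (negP (negP q)) := by rw [negP_negP]; exact hin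
    exact h (negP q) hq' (inTL_negP.mp h2)

lemma adj_negP {S : Finset (ℝ × ℝ)} {p q : ℝ × ℝ} :
    (pGraph (S.image negP)).Adj (negP p) (negP q) ↔ (pGraph S).Adj p q := by
  rw [pGraph_adj, pGraph_adj, mem_negP_image, mem_negP_image, negP_negP, negP_negP,
    inTL_negP, inTL_negP]
  tauto

lemma distinct_negP {S : Finset (ℝ × ℝ)} (h : DistinctCoords S) :
    DistinctCoords (S.image negP) := by
  intro p hp q hq hne
  have hp' := mem_negP_image.mp hp
  have hq' := mem_negP_image.mp hq
  have hne' : negP p ≠ negP q := fun he => hne (by rw [← negP_negP p, he, negP_negP])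
  obtain ⟨h1, h2⟩ := h _ hp' _ hq' hne'
  exact ⟨fun he => h1 (by simp [negP, he]), fun he => h2 (by simp [negP, he])⟩

theorem bottom_key (S S' : Finset (ℝ × ℝ)) (hsub : S ⊆ S') (hS' : DistinctCoords S')
    (Bf Bl : ℝ × ℝ → ℝ × ℝ)
    (hBf : ∀ v ∈ S, Bf v ∈ S' ∧ onBottom S' (Bf v) ∧ (pGraph S').Adj v (Bf v) ∧
      ∀ q ∈ S', onBottom S' q → (pGraph S').Adj v q → (Bf v).1 ≤ q.1)
    (hBl : ∀ v ∈ S, Bl v ∈ S' ∧ onBottom S' (Bl v) ∧ (pGraph S').Adj v (Bl v) ∧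
      ∀ q ∈ S', onBottom S' q → (pGraph S').Adj v q → q.1 ≤ (Bl v).1)
    (haux_b : ∀ v ∈ S, ∃ vb ∈ S', onBottom S' vb ∧
      vb.1 < v.1 ∧ vb.2 < (Bf v).2 ∧
      (∀ q ∈ S', q ≠ vb → ¬ (vb.1 ≤ q.1 ∧ q.1 < v.1)) ∧
      (∀ q ∈ S', q ≠ vb → ¬ (vb.2 ≤ q.2 ∧ q.2 < (Bf v).2)))
    (haux_b' : ∀ v ∈ S, ∃ vb' ∈ S', onBottom S' vb' ∧
      (Bl v).1 < vb'.1 ∧ v.2 < vb'.2 ∧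
      (∀ q ∈ S', q ≠ vb' → ¬ ((Bl v).1 < q.1 ∧ q.1 ≤ vb'.1)) ∧
      (∀ q ∈ S', q ≠ vb' → ¬ (v.2 < q.2 ∧ q.2 ≤ vb'.2))) :
    ∀ v ∈ S, ∀ w ∈ S, v ≠ w →
      (inTL v w ↔ (Bf v).1 < (Bf w).1 ∧ (Bf w).1 ≤ (Bl w).1 ∧ (Bl w).1 < (Bl v).1) := by
  -- two bottom points form a chain: smaller y means smaller x
  have chain : ∀ a ∈ S', ∀ b ∈ S', onBottom S' b → a.2 < b.2 → a.1 < b.1 := by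
    intro a ha b hb hob hy
    rcases lt_trichotomy a.1 b.1 with h | h | h
    · exact h
    · exfalso
      have hne : a ≠ b := fun he => absurd (he ▸ hy) (lt_irrefl _)
      exact (hS' a ha b hb hne).1 h
    · exact absurd ⟨h, hy⟩ (hob a ha)
  -- no original point is on the bottom boundary
  have notBot : ∀ v ∈ S, ¬ onBottom S' v := by
    intro v hv hbv
    obtain ⟨hm, hb, hadj, -⟩ := hBl v hv
    rcases hadj.2.2 with h | h
    · exact hbv _ hm h
    · exact hb _ (hsub hv) h
  -- any bottom point right of Bl v and above v is right of v
  have fact3 : ∀ v ∈ S, ∀ b ∈ S', onBottom S' b → (Bl v).1 < b.1 → v.2 < b.2 → v.1 < b.1 := by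
    intro v hv b hb hob h1 h2
    rcases lt_trichotomy v.1 b.1 with h | h | h
    · exact h
    · exact absurd h (hS' v (hsub hv) b hb (fun he => notBot v hv (he ▸ hob))).1
    · exfalso
      have hadj : (pGraph S').Adj v b := ⟨hsub hv, hb, Or.inr ⟨h, h2⟩⟩
      have := (hBl v hv).2.2.2 b hb hob hadj
      linarith
  -- any bottom point left of v and below Bf v is left of Bf v and below v
  have fact4 : ∀ v ∈ S, ∀ b ∈ S', onBottom S' b → b.1 < v.1 → b.2 < (Bf v).2 →
      b.1 < (Bf v).1 ∧ b.2 < v.2 := by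
    intro v hv b hb hob h1 h2
    have hx : b.1 < (Bf v).1 := chain b hb (Bf v) (hBf v hv).1 (hBf v hv).2.1 h2
    refine ⟨hx, ?_⟩
    rcases lt_trichotomy b.2 v.2 with h | h | h
    · exact h
    · exact absurd h.symm
        ((hS' v (hsub hv) b hb (fun he => notBot v hv (he ▸ hob))).2)
    · exfalso
      have hadj : (pGraph S').Adj v b := ⟨hsub hv, hb, Or.inr ⟨h1, h⟩⟩
      have := (hBf v hv).2.2.2 b hb hob hadj
      linarith
  -- the forward direction
  have fwd : ∀ v ∈ S, ∀ w ∈ S, inTL v w → (Bf v).1 < (Bf w).1 ∧ (Bl w).1 < (Bl v).1 := by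
    intro v hv w hw hvw
    obtain ⟨hx, hy⟩ := hvw
    constructor
    · obtain ⟨wb, hwb, hob, h1, h2, hxs, hys⟩ := haux_b w hw
      have hbf := fact4 w hw wb hwb hob h1 h2
      have hvne : v ≠ wb := fun he => notBot v hv (he ▸ hob)
      have hvx : v.1 < wb.1 := by
        rcases lt_or_ge v.1 wb.1 with h | h
        · exact h
        · exact (hxs v (hsub hv) hvne ⟨h, hx⟩).elim
      have hvy : wb.2 < v.2 := by
        rcases lt_or_ge wb.2 v.2 with h | h
        · exact h
        · exact (hob w (hsub hw) ⟨h1, lt_of_lt_of_le hy h⟩).elim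
      have hadj : (pGraph S').Adj v wb := ⟨hsub hv, hwb, Or.inl ⟨hvx, hvy⟩⟩
      have := (hBf v hv).2.2.2 wb hwb hob hadj
      linarith [hbf.1]
    · obtain ⟨wb', hwb', hob, h1, h2, hxs, hys⟩ := haux_b' w hw
      have hwx : w.1 < wb'.1 := fact3 w hw wb' hwb' hob h1 h2
      have hvne : v ≠ wb' := by intro he; rw [he] at hx; linarith
      have hvy : wb'.2 < v.2 := by
        rcases lt_or_ge wb'.2 v.2 with h | h
        · exact h
        · exact (hys v (hsub hv) hvne ⟨hy, h⟩).elim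
      have hadj : (pGraph S').Adj v wb' := ⟨hsub hv, hwb', Or.inl ⟨lt_trans hx hwx, hvy⟩⟩
      have := (hBl v hv).2.2.2 wb' hwb' hob hadj
      linarith
  intro v hv w hw hvw
  have hmid : (Bf w).1 ≤ (Bl w).1 :=
    (hBf w hw).2.2.2 (Bl w) (hBl w hw).1 (hBl w hw).2.1 (hBl w hw).2.2.1
  constructor
  · intro h
    obtain ⟨a, b⟩ := fwd v hv w hw h
    exact ⟨a, hmid, b⟩
  · rintro ⟨h1, h2, h3⟩
    have hne := hS' v (hsub hv) w (hsub hw) hvw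
    rcases lt_trichotomy v.1 w.1 with hx | hx | hx
    · rcases lt_trichotomy w.2 v.2 with hy | hy | hy
      · exact ⟨hx, hy⟩
      · exact (hne.2 hy.symm).elim
      · exfalso
        obtain ⟨vb', hvb', hob, hh1, hh2, hxs, hys⟩ := haux_b' v hv
        have hvx : v.1 < vb'.1 := fact3 v hv vb' hvb' hob hh1 hh2
        have hwne : w ≠ vb' := fun he => notBot w hw (he ▸ hob)
        have hwy : vb'.2 < w.2 := by
          rcases lt_or_ge vb'.2 w.2 with h | h
          · exact h
          · exact (hys w (hsub hw) hwne ⟨hy, h⟩).elim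
        rcases lt_trichotomy w.1 vb'.1 with h | h | h
        · have hadj : (pGraph S').Adj w vb' := ⟨hsub hw, hvb', Or.inl ⟨h, hwy⟩⟩
          have := (hBl w hw).2.2.2 vb' hvb' hob hadj
          linarith
        · exact (hS' w (hsub hw) vb' hvb' hwne).1 h
        · obtain ⟨hm, hb, hadj, -⟩ := hBl w hw
          rcases hadj.2.2 with ha | ha
          · linarith [ha.1]
          · have := chain vb' hvb' (Bl w) hm hb (lt_trans hwy ha.2)
            linarith
    · exact (hne.1 hx).elim
    · rcases lt_trichotomy w.2 v.2 with hy | hy | hy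
      · exfalso
        obtain ⟨vb, hvb, hob, hh1, hh2, hxs, hys⟩ := haux_b v hv
        have hf := fact4 v hv vb hvb hob hh1 hh2
        have hwne : w ≠ vb := fun he => notBot w hw (he ▸ hob)
        have hwx : w.1 < vb.1 := by
          rcases lt_or_ge w.1 vb.1 with h | h
          · exact h
          · exact (hxs w (hsub hw) hwne ⟨h, hx⟩).elim
        rcases lt_trichotomy w.2 vb.2 with h | h | h
        · obtain ⟨hm, hb, hadj, -⟩ := hBf w hw
          rcases hadj.2.2 with ha | ha
          · have := chain (Bf w) hm vb hvb hob (lt_trans ha.2 h)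
            linarith [hf.1]
          · linarith [ha.1, hf.1]
        · exact (hS' w (hsub hw) vb hvb hwne).2 h
        · have hadj : (pGraph S').Adj w vb := ⟨hsub hw, hvb, Or.inl ⟨hwx, h⟩⟩
          have := (hBf w hw).2.2.2 vb hvb hob hadj
          linarith [hf.1]
      · exact (hne.2 hy.symm).elim
      · exfalso
        have := (fwd w hw v hv ⟨hx, hy⟩).1
        linarith


/-- let `S'` be the augmentation of the original point set `S` obtained
by adding, for every original point `v`, the four auxiliary boundary points
`v_b = (v.1 − ε, Bfirst(v).2 − ε)`, `v_b' = (Blast(v).1 + ε, v.2 + ε)` on the bottom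
boundary and `v_t = (Tfirst(v).1 − ε, v.2 − ε)`, `v_t' = (v.1 + ε, Tlast(v).2 + ε)` on
the top boundary (described below by their positions and the emptiness of the offset
strips). Here `Bf, Bl, Tf, Tl` are the extreme boundary neighbours (first/last in
boundary order, i.e. by x-coordinate) in `S'`. Then for any two original points
`v, w`: `w` lies in the bottom-right quadrant of `v` iff
`Bfirst(v) < Bfirst(w) ≤ Blast(w) < Blast(v)` in bottom-boundary order, and `w` lies
in the top-left quadrant of `v` iff `Tfirst(v) < Tfirst(w) ≤ Tlast(w) < Tlast(v)`. -/
theorem stmt17 (S S' : Finset (ℝ × ℝ)) (hsub : S ⊆ S') (hS' : DistinctCoords S')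
    (Bf Bl Tf Tl : ℝ × ℝ → ℝ × ℝ)
    (hBf : ∀ v ∈ S, Bf v ∈ S' ∧ onBottom S' (Bf v) ∧ (pGraph S').Adj v (Bf v) ∧
      ∀ q ∈ S', onBottom S' q → (pGraph S').Adj v q → (Bf v).1 ≤ q.1)
    (hBl : ∀ v ∈ S, Bl v ∈ S' ∧ onBottom S' (Bl v) ∧ (pGraph S').Adj v (Bl v) ∧
      ∀ q ∈ S', onBottom S' q → (pGraph S').Adj v q → q.1 ≤ (Bl v).1)
    (hTf : ∀ v ∈ S, Tf v ∈ S' ∧ onTop S' (Tf v) ∧ (pGraph S').Adj v (Tf v) ∧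
      ∀ q ∈ S', onTop S' q → (pGraph S').Adj v q → (Tf v).1 ≤ q.1)
    (hTl : ∀ v ∈ S, Tl v ∈ S' ∧ onTop S' (Tl v) ∧ (pGraph S').Adj v (Tl v) ∧
      ∀ q ∈ S', onTop S' q → (pGraph S').Adj v q → q.1 ≤ (Tl v).1)
    -- the auxiliary point `v_b = (v.1 − ε, Bfirst(v).2 − ε)`:
    (haux_b : ∀ v ∈ S, ∃ vb ∈ S', onBottom S' vb ∧
      vb.1 < v.1 ∧ vb.2 < (Bf v).2 ∧
      (∀ q ∈ S', q ≠ vb → ¬ (vb.1 ≤ q.1 ∧ q.1 < v.1)) ∧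
      (∀ q ∈ S', q ≠ vb → ¬ (vb.2 ≤ q.2 ∧ q.2 < (Bf v).2)))
    -- the auxiliary point `v_b' = (Blast(v).1 + ε, v.2 + ε)`:
    (haux_b' : ∀ v ∈ S, ∃ vb' ∈ S', onBottom S' vb' ∧
      (Bl v).1 < vb'.1 ∧ v.2 < vb'.2 ∧
      (∀ q ∈ S', q ≠ vb' → ¬ ((Bl v).1 < q.1 ∧ q.1 ≤ vb'.1)) ∧
      (∀ q ∈ S', q ≠ vb' → ¬ (v.2 < q.2 ∧ q.2 ≤ vb'.2)))
    -- the auxiliary point `v_t = (Tfirst(v).1 − ε, v.2 − ε)`: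
    (haux_t : ∀ v ∈ S, ∃ vt ∈ S', onTop S' vt ∧
      vt.1 < (Tf v).1 ∧ vt.2 < v.2 ∧
      (∀ q ∈ S', q ≠ vt → ¬ (vt.1 ≤ q.1 ∧ q.1 < (Tf v).1)) ∧
      (∀ q ∈ S', q ≠ vt → ¬ (vt.2 ≤ q.2 ∧ q.2 < v.2)))
    -- the auxiliary point `v_t' = (v.1 + ε, Tlast(v).2 + ε)`:
    (haux_t' : ∀ v ∈ S, ∃ vt' ∈ S', onTop S' vt' ∧
      v.1 < vt'.1 ∧ (Tl v).2 < vt'.2 ∧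
      (∀ q ∈ S', q ≠ vt' → ¬ (v.1 < q.1 ∧ q.1 ≤ vt'.1)) ∧
      (∀ q ∈ S', q ≠ vt' → ¬ ((Tl v).2 < q.2 ∧ q.2 ≤ vt'.2))) :
    ∀ v ∈ S, ∀ w ∈ S, v ≠ w →
      (inTL v w ↔ (Bf v).1 < (Bf w).1 ∧ (Bf w).1 ≤ (Bl w).1 ∧ (Bl w).1 < (Bl v).1) ∧
      (inTL w v ↔ (Tf v).1 < (Tf w).1 ∧ (Tf w).1 ≤ (Tl w).1 ∧ (Tl w).1 < (Tl v).1) := by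

  have bot := bottom_key S S' hsub hS' Bf Bl hBf hBl haux_b haux_b'
  have hBf' : ∀ p ∈ S.image negP, negP (Tl (negP p)) ∈ S'.image negP ∧
      onBottom (S'.image negP) (negP (Tl (negP p))) ∧
      (pGraph (S'.image negP)).Adj p (negP (Tl (negP p))) ∧
      ∀ q ∈ S'.image negP, onBottom (S'.image negP) q →
        (pGraph (S'.image negP)).Adj p q → (negP (Tl (negP p))).1 ≤ q.1 := by
    intro p hp
    have hp' : negP p ∈ S := mem_negP_image.mp hp
    obtain ⟨hm, ht, hadj, hmin⟩ := hTl (negP p) hp'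
    refine ⟨Finset.mem_image_of_mem _ hm, onBottom_negP.mpr ht, ?_, ?_⟩
    · have := adj_negP.mpr hadj
      rwa [negP_negP] at this
    · intro q hq hbq hA
      have hq' : negP q ∈ S' := mem_negP_image.mp hq
      have hto : onTop S' (negP q) := by
        rw [← onBottom_negP, negP_negP]; exact hbq
      have hA' : (pGraph S').Adj (negP p) (negP q) := by
        rw [← adj_negP, negP_negP, negP_negP]; exact hA
      have := hmin (negP q) hq' hto hA'
      simp only [negP] at this ⊢
      linarith
  have hBl' : ∀ p ∈ S.image negP, negP (Tf (negP p)) ∈ S'.image negP ∧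
      onBottom (S'.image negP) (negP (Tf (negP p))) ∧
      (pGraph (S'.image negP)).Adj p (negP (Tf (negP p))) ∧
      ∀ q ∈ S'.image negP, onBottom (S'.image negP) q →
        (pGraph (S'.image negP)).Adj p q → q.1 ≤ (negP (Tf (negP p))).1 := by
    intro p hp
    have hp' : negP p ∈ S := mem_negP_image.mp hp
    obtain ⟨hm, ht, hadj, hmin⟩ := hTf (negP p) hp'
    refine ⟨Finset.mem_image_of_mem _ hm, onBottom_negP.mpr ht, ?_, ?_⟩
    · have := adj_negP.mpr hadj
      rwa [negP_negP] at this
    · intro q hq hbq hA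
      have hq' : negP q ∈ S' := mem_negP_image.mp hq
      have hto : onTop S' (negP q) := by
        rw [← onBottom_negP, negP_negP]; exact hbq
      have hA' : (pGraph S').Adj (negP p) (negP q) := by
        rw [← adj_negP, negP_negP, negP_negP]; exact hA
      have := hmin (negP q) hq' hto hA'
      simp only [negP] at this ⊢
      linarith
  have haux_b2 : ∀ p ∈ S.image negP, ∃ vb ∈ S'.image negP, onBottom (S'.image negP) vb ∧
      vb.1 < p.1 ∧ vb.2 < (negP (Tl (negP p))).2 ∧
      (∀ q ∈ S'.image negP, q ≠ vb → ¬ (vb.1 ≤ q.1 ∧ q.1 < p.1)) ∧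
      (∀ q ∈ S'.image negP, q ≠ vb → ¬ (vb.2 ≤ q.2 ∧ q.2 < (negP (Tl (negP p))).2)) := by
    intro p hp
    have hp' : negP p ∈ S := mem_negP_image.mp hp
    obtain ⟨vt', hm, ht, h1, h2, hxs, hys⟩ := haux_t' (negP p) hp'
    refine ⟨negP vt', Finset.mem_image_of_mem _ hm, onBottom_negP.mpr ht, ?_, ?_, ?_, ?_⟩
    · simp only [negP] at h1 ⊢; linarith
    · simp only [negP] at h2 ⊢; linarith
    · intro q hq hne hcon
      have hq' : negP q ∈ S' := mem_negP_image.mp hq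
      have hne' : negP q ≠ vt' := fun he => hne (by rw [← he, negP_negP])
      obtain ⟨hc1, hc2⟩ := hcon
      apply hxs (negP q) hq' hne'
      simp only [negP] at hc1 hc2 ⊢
      exact ⟨by linarith, by linarith⟩
    · intro q hq hne hcon
      have hq' : negP q ∈ S' := mem_negP_image.mp hq
      have hne' : negP q ≠ vt' := fun he => hne (by rw [← he, negP_negP])
      obtain ⟨hc1, hc2⟩ := hcon
      apply hys (negP q) hq' hne'
      simp only [negP] at hc1 hc2 ⊢
      exact ⟨by linarith, by linarith⟩
  have haux_b2' : ∀ p ∈ S.image negP, ∃ vb' ∈ S'.image negP, onBottom (S'.image negP) vb' ∧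
      (negP (Tf (negP p))).1 < vb'.1 ∧ p.2 < vb'.2 ∧
      (∀ q ∈ S'.image negP, q ≠ vb' → ¬ ((negP (Tf (negP p))).1 < q.1 ∧ q.1 ≤ vb'.1)) ∧
      (∀ q ∈ S'.image negP, q ≠ vb' → ¬ (p.2 < q.2 ∧ q.2 ≤ vb'.2)) := by
    intro p hp
    have hp' : negP p ∈ S := mem_negP_image.mp hp
    obtain ⟨vt, hm, ht, h1, h2, hxs, hys⟩ := haux_t (negP p) hp'
    refine ⟨negP vt, Finset.mem_image_of_mem _ hm, onBottom_negP.mpr ht, ?_, ?_, ?_, ?_⟩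
    · simp only [negP] at h1 ⊢; linarith
    · simp only [negP] at h2 ⊢; linarith
    · intro q hq hne hcon
      have hq' : negP q ∈ S' := mem_negP_image.mp hq
      have hne' : negP q ≠ vt := fun he => hne (by rw [← he, negP_negP])
      obtain ⟨hc1, hc2⟩ := hcon
      apply hxs (negP q) hq' hne'
      simp only [negP] at hc1 hc2 ⊢
      exact ⟨by linarith, by linarith⟩
    · intro q hq hne hcon
      have hq' : negP q ∈ S' := mem_negP_image.mp hq
      have hne' : negP q ≠ vt := fun he => hne (by rw [← he, negP_negP])
      obtain ⟨hc1, hc2⟩ := hcon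
      apply hys (negP q) hq' hne'
      simp only [negP] at hc1 hc2 ⊢
      exact ⟨by linarith, by linarith⟩
  intro v hv w hw hvw
  refine ⟨bot v hv w hw hvw, ?_⟩
  have key := bottom_key (S.image negP) (S'.image negP) (Finset.image_subset_image hsub)
    (distinct_negP hS') (fun p => negP (Tl (negP p))) (fun p => negP (Tf (negP p)))
    hBf' hBl' haux_b2 haux_b2'
  have hvw' : negP v ≠ negP w := fun he => hvw (by rw [← negP_negP v, he, negP_negP])
  have hiff := key (negP v) (Finset.mem_image_of_mem _ hv) (negP w)
    (Finset.mem_image_of_mem _ hw) hvw'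
  rw [inTL_negP] at hiff
  simp only [negP_negP] at hiff
  simp only [negP] at hiff
  constructor
  · intro h
    obtain ⟨a, b, c⟩ := hiff.mp h
    exact ⟨by linarith, by linarith, by linarith⟩
  · rintro ⟨a, b, c⟩
    exact hiff.mpr ⟨by linarith, by linarith, by linarith⟩
end
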